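/- Let a < b be reals and g : [a,b] → ℝ be continuous with g(x) ≥ 0 for all x ∈ [a,b]. Suppose (i) for every x ∈ [a,b) with g(x) > 0 there exists δ > 0 such that g(x') ≤ g(x) for every x' ∈ [x, min(x+δ, b)], and (ii) for all x, y ∈ [a,b] with x ≤ y, g(x) = 0 implies g(y) = 0. Then g is monotonically non-increasing on [a,b]: for all x, y ∈ [a,b] with x ≤ y, g(y) ≤ g(x). -/

import Mathlib

/-- A continuous nonnegative function on `[a,b]` that is locally
non-increasing to the right wherever it is positive, and whose zero set is upward
closed, is globally non-increasing on `[a,b]`. -/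
theorem locally_nonincreasing_implies_nonincreasing
    (a b : ℝ) (hab : a < b) (g : ℝ → ℝ)
    (hg : ContinuousOn g (Set.Icc a b))
    (hnonneg : ∀ x ∈ Set.Icc a b, 0 ≤ g x)
    -- (i) locally non-increasing to the right wherever positive
    (hloc : ∀ x ∈ Set.Ico a b, 0 < g x →
      ∃ δ > (0 : ℝ), ∀ x' ∈ Set.Icc x (min (x + δ) b), g x' ≤ g x)
    -- (ii) the zero set is upward closed
    (hzero : ∀ x ∈ Set.Icc a b, ∀ y ∈ Set.Icc a b, x ≤ y → g x = 0 → g y = 0) :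
    ∀ x ∈ Set.Icc a b, ∀ y ∈ Set.Icc a b, x ≤ y → g y ≤ g x := by
  intro x hx y hy hxy
  rcases eq_or_lt_of_le (hnonneg x hx) with h0 | hpos
  · rw [hzero x hx y hy hxy h0.symm]; exact hnonneg x hx
  -- g x > 0
  set S : Set ℝ := {t | t ∈ Set.Icc x y ∧ ∀ z ∈ Set.Icc x t, g z ≤ g x} with hS
  have hxS : x ∈ S := ⟨⟨le_refl x, hxy⟩, fun z hz => by
    have : z = x := le_antisymm hz.2 hz.1
    simp [this]⟩
  have hSne : S.Nonempty := ⟨x, hxS⟩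
  have hSbdd : BddAbove S := ⟨y, fun t ht => ht.1.2⟩
  set c := sSup S with hc
  have hxc : x ≤ c := le_csSup hSbdd hxS
  have hcy : c ≤ y := csSup_le hSne (fun t ht => ht.1.2)
  have hcab : c ∈ Set.Icc a b := ⟨le_trans hx.1 hxc, le_trans hcy hy.2⟩
  -- c ∈ S
  have hbelow : ∀ z ∈ Set.Ico x c, g z ≤ g x := by
    intro z hz
    obtain ⟨t, htS, hzt⟩ := exists_lt_of_lt_csSup hSne hz.2
    exact htS.2 z ⟨hz.1, hzt.le⟩
  have hgc : g c ≤ g x := by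
    rcases eq_or_lt_of_le hxc with h | h
    · rw [← h]
    · have hne : (nhdsWithin c (Set.Ico x c)).NeBot := by
        rw [nhdsWithin_Ico_eq_nhdsLT h]
        exact nhdsLT_neBot c
      have hcont : Filter.Tendsto g (nhdsWithin c (Set.Ico x c)) (nhds (g c)) := by
        apply (hg c hcab).mono
        intro z hz
        exact ⟨le_trans hx.1 hz.1, le_trans hz.2.le (le_trans hcy hy.2)⟩
      exact le_of_tendsto hcont (Filter.eventually_of_mem self_mem_nhdsWithin hbelow)
  have hcS : c ∈ S := by
    refine ⟨⟨hxc, hcy⟩, fun z hz => ?_⟩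
    rcases eq_or_lt_of_le hz.2 with h | h
    · rw [h]; exact hgc
    · exact hbelow z ⟨hz.1, h⟩
  -- c = y
  have hcey : c = y := by
    by_contra hne
    have hclt : c < y := lt_of_le_of_ne hcy hne
    rcases eq_or_lt_of_le (hnonneg c hcab) with h0 | hposc
    · -- g c = 0, then y ∈ S
      have hyS : y ∈ S := by
        refine ⟨⟨hxy, le_refl y⟩, fun z hz => ?_⟩
        rcases le_or_gt z c with hzc | hcz
        · exact hcS.2 z ⟨hz.1, hzc⟩
        · have hzab : z ∈ Set.Icc a b :=
            ⟨le_trans hx.1 hz.1, le_trans hz.2 hy.2⟩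
          rw [hzero c hcab z hzab hcz.le h0.symm]
          exact hpos.le
      exact absurd (le_csSup hSbdd hyS) (not_le_of_gt hclt)
    · -- g c > 0, extend to the right
      have hcIco : c ∈ Set.Ico a b := ⟨hcab.1, lt_of_lt_of_le hclt hy.2⟩
      obtain ⟨δ, hδ, hδle⟩ := hloc c hcIco hposc
      set t := min (c + δ) y with ht
      have hct : c < t := lt_min (by linarith) hclt
      have htS : t ∈ S := by
        refine ⟨⟨le_trans hxc hct.le, min_le_right _ _⟩, fun z hz => ?_⟩
        rcases le_or_gt z c with hzc | hcz
        · exact hcS.2 z ⟨hz.1, hzc⟩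
        · have : g z ≤ g c := by
            apply hδle z
            constructor
            · exact hcz.le
            · exact le_trans hz.2 (min_le_min (le_refl _) hy.2)
          exact le_trans this hgc
      exact absurd (le_csSup hSbdd htS) (not_le_of_gt hct)
  rw [← hcey]
  exact hgc
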